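/- arXiv:1001.1247 — 2 statements merged into one kernel-verified Lean document; each statement's English description precedes it below -/
import Mathlib

section
/- Let Ω ⊆ ℝⁿ be a bounded Lipschitz domain satisfying the A-property: there exist A ≥ 1 and r₀ ∈ (0, min(d,1)) such that |B_r(x)| ≤ A|Ω ∩ B_r(x)| for all x ∈ Ω and 0 < r < r₀. Then there exists C > 0 (depending on A, r₀, n, and the diameter d of Ω) such that for every f ∈ BMO(Ω) ∩ L²(Ω), every x ∈ Ω, and every r ∈ (0, r₀): |f_{Ω_r(x)}| ≤ C(1 + |ln r|)(‖f‖_{L²(Ω)} + [f]_{BMO(Ω)}), where f_{Ω_r(x)} is the average of f over Ω ∩ B_r(x). -/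
open MeasureTheory Metric Set
open scoped ENNReal

/-- Difference of averages over nested sets is controlled by the mean oscillation
over the larger set times the measure ratio. -/
lemma stmt_7_avg_diff {X : Type*} [MeasurableSpace X] (μ : Measure X) (f : X → ℝ)
    (s t : Set X) (hst : s ⊆ t) (hs : (μ s) ≠ 0) (ht : μ t ≠ ⊤)
    (hint : IntegrableOn f t μ) (K : ℝ)
    (hK : ⨍ y in t, |f y - ⨍ z in t, f z ∂μ| ∂μ ≤ K) :
    |(⨍ y in s, f y ∂μ) - ⨍ z in t, f z ∂μ| ≤ (μ t).toReal / (μ s).toReal * K := by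
  set c := ⨍ z in t, f z ∂μ with hc
  have hμs_ne : μ s ≠ ⊤ := ((measure_mono hst).trans_lt ht.lt_top).ne
  have hs0 : 0 < (μ s).toReal := ENNReal.toReal_pos hs hμs_ne
  have ht0 : 0 < (μ t).toReal := ENNReal.toReal_pos
    (fun h => hs (le_antisymm ((measure_mono hst).trans h.le) zero_le)) ht
  have hints : IntegrableOn f s μ := hint.mono_set hst
  have hcs : IntegrableOn (fun _ => c) s μ := integrableOn_const hμs_ne
  have key : (⨍ y in s, f y ∂μ) - c = ⨍ y in s, (f y - c) ∂μ := by
    rw [setAverage_eq, setAverage_eq, integral_sub hints hcs, setIntegral_const, smul_sub,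
      smul_smul, inv_mul_cancel₀ (show μ.real s ≠ 0 from hs0.ne'), one_smul]
  rw [key]
  calc |⨍ y in s, (f y - c) ∂μ| ≤ ⨍ y in s, |f y - c| ∂μ := by
        rw [setAverage_eq, setAverage_eq]
        simp only [smul_eq_mul, abs_mul, abs_of_nonneg (inv_nonneg.2 measureReal_nonneg)]
        gcongr
        simpa [Real.norm_eq_abs] using
          norm_integral_le_integral_norm (μ := μ.restrict s) (fun y => f y - c)
    _ = (μ s).toReal⁻¹ * ∫ y in s, |f y - c| ∂μ := by rw [setAverage_eq]; rfl
    _ ≤ (μ s).toReal⁻¹ * ∫ y in t, |f y - c| ∂μ := by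
        refine mul_le_mul_of_nonneg_left ?_ (inv_nonneg.2 ENNReal.toReal_nonneg)
        exact setIntegral_mono_set ((hint.sub (integrableOn_const ht : IntegrableOn (fun _ => c) t μ)).abs)
          (ae_of_all _ fun y => abs_nonneg _) (HasSubset.Subset.eventuallyLE hst)
    _ = (μ t).toReal / (μ s).toReal * ⨍ y in t, |f y - c| ∂μ := by
        rw [setAverage_eq, smul_eq_mul, measureReal_def]; field_simp
    _ ≤ (μ t).toReal / (μ s).toReal * K := by
        have := div_nonneg (ENNReal.toReal_nonneg (a := μ t)) (ENNReal.toReal_nonneg (a := μ s))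
        exact mul_le_mul_of_nonneg_left hK this

set_option maxHeartbeats 1000000 in
/-- Logarithmic growth of ball averages of a BMO ∩ L² function on a bounded
domain satisfying the A-property:
|f_{Ω_r(x)}| ≤ C (1 + |ln r|) (‖f‖_{L²(Ω)} + [f]_{BMO(Ω)}). -/
theorem stmt_7 (n : ℕ) (Ω : Set (EuclideanSpace ℝ (Fin n)))
    (hmeas : MeasurableSet Ω) (hb : Bornology.IsBounded Ω)
    (d A r₀ : ℝ) (hd : Metric.diam Ω = d) (hd0 : 0 < d)
    (hA : 1 ≤ A) (hr₀0 : 0 < r₀) (hr₀ : r₀ < min d 1)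
    (hAprop : ∀ x ∈ Ω, ∀ r : ℝ, 0 < r → r < r₀ →
      volume (ball x r) ≤ ENNReal.ofReal A * volume (Ω ∩ ball x r)) :
    ∃ C > 0, ∀ (f : EuclideanSpace ℝ (Fin n) → ℝ) (K : ℝ),
      MemLp f 2 (volume.restrict Ω) →
      0 ≤ K →
      (∀ x ∈ Ω, ∀ r : ℝ, 0 < r → r < d →
        ⨍ y in Ω ∩ ball x r, |f y - ⨍ z in Ω ∩ ball x r, f z| ≤ K) →
      ∀ x ∈ Ω, ∀ r : ℝ, 0 < r → r < r₀ →
        |⨍ y in Ω ∩ ball x r, f y|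
          ≤ C * (1 + |Real.log r|)
            * ((eLpNorm f 2 (volume.restrict Ω)).toReal + K) := by
  classical
  have hr₀d : r₀ < d := lt_of_lt_of_le hr₀ (min_le_left _ _)
  have hr₀1 : r₀ < 1 := lt_of_lt_of_le hr₀ (min_le_right _ _)
  have hΩfin : volume Ω < ⊤ := hb.measure_lt_top
  haveI : IsFiniteMeasure (volume.restrict Ω) :=
    ⟨by rw [Measure.restrict_apply_univ]; exact hΩfin⟩
  have hA0 : (0:ℝ) < A := lt_of_lt_of_le one_pos hA
  set v : ℝ := (volume (ball (0 : EuclideanSpace ℝ (Fin n)) (r₀/2))).toReal with hv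
  have hv0 : 0 < v :=
    ENNReal.toReal_pos (measure_ball_pos volume 0 (by positivity)).ne' measure_ball_lt_top.ne
  set c : ℝ := 2^n * A with hcdef
  have hc0 : 0 < c := by positivity
  set W : ℝ := (volume Ω).toReal ^ (2⁻¹ : ℝ) with hW
  have hW0 : 0 ≤ W := Real.rpow_nonneg ENNReal.toReal_nonneg _
  refine ⟨2*c + A/v*W + 1, by positivity, ?_⟩
  intro f K hf hK0 hBMO x hx r hr0 hrr₀
  set Q : ℝ := (eLpNorm f 2 (volume.restrict Ω)).toReal with hQ
  have hQ0 : 0 ≤ Q := ENNReal.toReal_nonneg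
  have hfint : IntegrableOn f Ω := hf.integrable one_le_two
  -- the L¹ norm is controlled by the L² norm
  have hI1 : ∫ y in Ω, |f y| ≤ Q * W := by
    have h1 : eLpNorm f 1 (volume.restrict Ω)
        ≤ eLpNorm f 2 (volume.restrict Ω) * (volume Ω) ^ (2⁻¹ : ℝ) := by
      have := eLpNorm_le_eLpNorm_mul_rpow_measure_univ (μ := volume.restrict Ω)
        (p := 1) (q := 2) one_le_two hf.1
      rw [Measure.restrict_apply_univ] at this
      convert this using 2
      norm_num
    have h2 : ENNReal.ofReal (∫ y in Ω, ‖f y‖) = eLpNorm f 1 (volume.restrict Ω) := by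
      rw [eLpNorm_one_eq_lintegral_enorm, ofReal_integral_norm_eq_lintegral_enorm hfint]
    have h3 : ∫ y in Ω, |f y| = (eLpNorm f 1 (volume.restrict Ω)).toReal := by
      rw [← h2, ENNReal.toReal_ofReal (integral_nonneg fun y => norm_nonneg _)]
      simp [Real.norm_eq_abs]
    rw [h3]
    have hne : eLpNorm f 2 (volume.restrict Ω) * (volume Ω) ^ (2⁻¹ : ℝ) ≠ ⊤ :=
      ENNReal.mul_ne_top hf.2.ne (ENNReal.rpow_ne_top_of_nonneg (by norm_num) hΩfin.ne)
    calc (eLpNorm f 1 (volume.restrict Ω)).toReal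
        ≤ (eLpNorm f 2 (volume.restrict Ω) * (volume Ω) ^ (2⁻¹ : ℝ)).toReal :=
          ENNReal.toReal_mono hne h1
      _ = Q * W := by rw [ENNReal.toReal_mul, ← ENNReal.toReal_rpow]
  -- positivity of the measure of Ω ∩ ball x ρ for 0 < ρ < r₀
  have hpos : ∀ ρ : ℝ, 0 < ρ → ρ < r₀ → volume (Ω ∩ ball x ρ) ≠ 0 := by
    intro ρ hρ hρr₀ h0
    have := hAprop x hx ρ hρ hρr₀
    rw [h0, mul_zero] at this
    exact (measure_ball_pos volume x hρ).ne' (le_antisymm this zero_le)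
  have hfinsub : ∀ s : Set (EuclideanSpace ℝ (Fin n)), s ⊆ Ω → volume s ≠ ⊤ :=
    fun s hs => ((measure_mono hs).trans_lt hΩfin).ne
  -- single doubling step
  have step : ∀ ρ : ℝ, 0 < ρ → 2*ρ < r₀ →
      |(⨍ y in Ω ∩ ball x ρ, f y) - ⨍ y in Ω ∩ ball x (2*ρ), f y| ≤ c * K := by
    intro ρ hρ h2ρ
    have hρr₀ : ρ < r₀ := by linarith
    have hst : Ω ∩ ball x ρ ⊆ Ω ∩ ball x (2*ρ) :=
      inter_subset_inter_right Ω (ball_subset_ball (by linarith))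
    have hs : volume (Ω ∩ ball x ρ) ≠ 0 := hpos ρ hρ hρr₀
    have ht : volume (Ω ∩ ball x (2*ρ)) ≠ ⊤ := hfinsub _ inter_subset_left
    have hKb : ⨍ y in Ω ∩ ball x (2*ρ), |f y - ⨍ z in Ω ∩ ball x (2*ρ), f z| ≤ K :=
      hBMO x hx (2*ρ) (by linarith) (by linarith)
    have hmain := stmt_7_avg_diff volume f (Ω ∩ ball x ρ) (Ω ∩ ball x (2*ρ)) hst hs ht
      (hfint.mono_set inter_subset_left) K hKb
    refine hmain.trans ?_
    have hs0 : 0 < (volume (Ω ∩ ball x ρ)).toReal :=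
      ENNReal.toReal_pos hs (hfinsub _ inter_subset_left)
    have hratio : (volume (Ω ∩ ball x (2*ρ))).toReal ≤ c * (volume (Ω ∩ ball x ρ)).toReal := by
      have hball : volume (ball x (2*ρ)) = ENNReal.ofReal (2^n) * volume (ball x ρ) := by
        rw [Measure.addHaar_ball_mul_of_pos volume x two_pos ρ,
          finrank_euclideanSpace_fin, Measure.addHaar_ball_center volume x]
      have h1 : volume (Ω ∩ ball x (2*ρ)) ≤ ENNReal.ofReal c * volume (Ω ∩ ball x ρ) := by
        calc volume (Ω ∩ ball x (2*ρ)) ≤ volume (ball x (2*ρ)) :=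
              measure_mono inter_subset_right
          _ = ENNReal.ofReal (2^n) * volume (ball x ρ) := hball
          _ ≤ ENNReal.ofReal (2^n) * (ENNReal.ofReal A * volume (Ω ∩ ball x ρ)) := by
              gcongr
              exact hAprop x hx ρ hρ hρr₀
          _ = ENNReal.ofReal c * volume (Ω ∩ ball x ρ) := by
              rw [← mul_assoc, ← ENNReal.ofReal_mul (by positivity)]
      calc (volume (Ω ∩ ball x (2*ρ))).toReal
          ≤ (ENNReal.ofReal c * volume (Ω ∩ ball x ρ)).toReal :=
            ENNReal.toReal_mono
              (ENNReal.mul_ne_top ENNReal.ofReal_ne_top (hfinsub _ inter_subset_left)) h1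
        _ = c * (volume (Ω ∩ ball x ρ)).toReal := by
            rw [ENNReal.toReal_mul, ENNReal.toReal_ofReal hc0.le]
    have : (volume (Ω ∩ ball x (2*ρ))).toReal / (volume (Ω ∩ ball x ρ)).toReal ≤ c := by
      rw [div_le_iff₀ hs0]; exact hratio
    exact mul_le_mul_of_nonneg_right this hK0
  -- telescoping
  have tele : ∀ N : ℕ, ∀ ρ : ℝ, 0 < ρ → 2^N * ρ < r₀ →
      |(⨍ y in Ω ∩ ball x ρ, f y) - ⨍ y in Ω ∩ ball x (2^N * ρ), f y| ≤ N * (c * K) := by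
    intro N
    induction N with
    | zero => intro ρ hρ h; simp
    | succ m ih =>
      intro ρ hρ h
      have hmono : (2:ℝ)^m * (2*ρ) ≤ 2^(m+1) * ρ := by ring_nf; exact le_refl _
      have heq : (2:ℝ)^(m+1) * ρ = 2^m * (2*ρ) := by ring
      have h2ρ : 2^m * (2*ρ) < r₀ := by rw [← heq]; exact h
      have h2ρ' : 2*ρ < r₀ := by
        have h1 : (1:ℝ) ≤ 2^m := one_le_pow₀ one_le_two
        nlinarith
      have hstep := step ρ hρ h2ρ'
      have hih := ih (2*ρ) (by linarith) h2ρ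
      rw [← heq] at hih
      calc |(⨍ y in Ω ∩ ball x ρ, f y) - ⨍ y in Ω ∩ ball x (2^(m+1) * ρ), f y|
          ≤ |(⨍ y in Ω ∩ ball x ρ, f y) - ⨍ y in Ω ∩ ball x (2*ρ), f y|
            + |(⨍ y in Ω ∩ ball x (2*ρ), f y) - ⨍ y in Ω ∩ ball x (2^(m+1) * ρ), f y| :=
            abs_sub_le _ _ _
        _ ≤ c * K + m * (c * K) := add_le_add hstep hih
        _ = (m+1 : ℕ) * (c * K) := by push_cast; ring
  -- choose N with 2^N * r < r₀ ≤ 2^(N+1) * r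
  have hex : ∃ N : ℕ, r₀ ≤ 2^(N+1) * r := by
    obtain ⟨N, hN⟩ := pow_unbounded_of_one_lt (r₀ / r) (one_lt_two (α := ℝ))
    refine ⟨N, ?_⟩
    have : r₀ / r < 2^(N+1) := hN.trans_le (by
      apply pow_le_pow_right₀ one_le_two (Nat.le_succ N))
    calc r₀ = (r₀ / r) * r := by field_simp
      _ ≤ 2^(N+1) * r := by nlinarith
  set N : ℕ := Nat.find hex with hNdef
  have hN1 : r₀ ≤ 2^(N+1) * r := Nat.find_spec hex
  have hN2 : 2^N * r < r₀ := by
    rcases Nat.eq_zero_or_pos N with h0 | hpos'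
    · rw [h0]; simpa using hrr₀
    · have := Nat.find_min hex (m := N - 1) (by omega)
      push_neg at this
      have hE : N - 1 + 1 = N := by omega
      rwa [hE] at this
  set R : ℝ := 2^N * r with hR
  have hR0 : 0 < R := by positivity
  have hRhalf : r₀ / 2 ≤ R := by
    have : r₀ ≤ 2 * R := by rw [hR]; rw [pow_succ] at hN1; linarith [hN1]
    linarith
  -- bound on N
  have hNb : (N : ℝ) ≤ 2 * (1 + |Real.log r|) := by
    have hlog : (N : ℝ) * Real.log 2 + Real.log r < 0 := by
      have h1 : Real.log (2^N * r) < Real.log r₀ :=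
        Real.log_lt_log (by positivity) hN2
      have h2 : Real.log r₀ < 0 := Real.log_neg hr₀0 hr₀1
      rw [Real.log_mul (by positivity) hr0.ne', Real.log_pow] at h1
      push_cast at h1
      linarith
    have h3 : (N : ℝ) * Real.log 2 ≤ |Real.log r| := by
      have := neg_abs_le (Real.log r)
      linarith
    have h4 : (0.6931471803 : ℝ) < Real.log 2 := Real.log_two_gt_d9
    have hN0 : (0:ℝ) ≤ N := Nat.cast_nonneg N
    nlinarith [abs_nonneg (Real.log r)]
  -- bound the average at scale R
  have hRavg : |⨍ y in Ω ∩ ball x R, f y| ≤ A / v * (Q * W) := by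
    have hsub : Ω ∩ ball x (r₀/2) ⊆ Ω ∩ ball x R :=
      inter_subset_inter_right Ω (ball_subset_ball hRhalf)
    set m : ℝ := (volume (Ω ∩ ball x R)).toReal with hm
    have hmfin : volume (Ω ∩ ball x R) ≠ ⊤ := hfinsub _ inter_subset_left
    have hvA : v ≤ A * m := by
      have h1 : volume (ball x (r₀/2)) ≤ ENNReal.ofReal A * volume (Ω ∩ ball x R) := by
        exact (hAprop x hx (r₀/2) (by positivity) (by linarith)).trans
          (mul_le_mul_right (measure_mono hsub) _)
      have h2 := ENNReal.toReal_mono (ENNReal.mul_ne_top ENNReal.ofReal_ne_top hmfin) h1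
      rwa [ENNReal.toReal_mul, ENNReal.toReal_ofReal hA0.le,
        Measure.addHaar_ball_center volume x, ← hv] at h2
    have hm0 : 0 < m :=
      lt_of_lt_of_le (show (0:ℝ) < v/A by positivity) ((div_le_iff₀ hA0).mpr (by linarith))
    have hminv : m⁻¹ ≤ A / v := by
      rw [← inv_div]
      exact inv_anti₀ (by positivity) ((div_le_iff₀ hA0).2 (by linarith))
    have habs : |⨍ y in Ω ∩ ball x R, f y| ≤ m⁻¹ * ∫ y in Ω, |f y| := by
      rw [setAverage_eq]
      simp only [smul_eq_mul, abs_mul, abs_of_nonneg (inv_nonneg.2 measureReal_nonneg)]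
      rw [measureReal_def, ← hm]
      gcongr
      calc |∫ y in Ω ∩ ball x R, f y|
          ≤ ∫ y in Ω ∩ ball x R, |f y| := by
            simpa [Real.norm_eq_abs] using
              norm_integral_le_integral_norm (μ := volume.restrict (Ω ∩ ball x R)) f
        _ ≤ ∫ y in Ω, |f y| :=
            setIntegral_mono_set hfint.abs (ae_of_all _ fun y => abs_nonneg _)
              (HasSubset.Subset.eventuallyLE inter_subset_left)
    refine habs.trans ?_
    have hInonneg : 0 ≤ ∫ y in Ω, |f y| := integral_nonneg fun y => abs_nonneg _
    calc m⁻¹ * ∫ y in Ω, |f y| ≤ (A/v) * ∫ y in Ω, |f y| :=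
          mul_le_mul_of_nonneg_right hminv hInonneg
      _ ≤ A / v * (Q * W) := mul_le_mul_of_nonneg_left hI1 (by positivity)
  -- conclusion
  have htel := tele N r hr0 hN2
  rw [← hR] at htel
  have hfinal : |⨍ y in Ω ∩ ball x r, f y| ≤ N * (c * K) + A / v * (Q * W) := by
    calc |⨍ y in Ω ∩ ball x r, f y|
        ≤ |(⨍ y in Ω ∩ ball x r, f y) - ⨍ y in Ω ∩ ball x R, f y|
          + |⨍ y in Ω ∩ ball x R, f y| := by
          have := abs_sub_le (⨍ y in Ω ∩ ball x r, f y) (⨍ y in Ω ∩ ball x R, f y) 0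
          simpa using this
      _ ≤ N * (c * K) + A / v * (Q * W) := add_le_add htel hRavg
  refine hfinal.trans ?_
  set L : ℝ := |Real.log r| with hL
  have hL0 : (0:ℝ) ≤ L := abs_nonneg _
  have hP : (1:ℝ) ≤ 1 + L := by linarith
  have hQK : (0:ℝ) ≤ Q + K := by linarith
  have e1 : (N:ℝ)*(c*K) ≤ 2*c*((1+L)*(Q+K)) := by
    have h1 : (N:ℝ)*(c*K) ≤ (2*(1+L))*(c*K) :=
      mul_le_mul_of_nonneg_right hNb (by positivity)
    refine h1.trans ?_
    have h2 : (2*(1+L))*(c*K) = 2*c*((1+L)*K) := by ring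
    rw [h2]
    have h3 : (1+L)*K ≤ (1+L)*(Q+K) := mul_le_mul_of_nonneg_left (by linarith) (by linarith)
    exact mul_le_mul_of_nonneg_left h3 (by positivity)
  have e2 : A/v*(Q*W) ≤ (A/v*W)*((1+L)*(Q+K)) := by
    have h1 : A/v*(Q*W) = (A/v*W)*Q := by ring
    rw [h1]
    have h2 : Q ≤ (1+L)*(Q+K) := by nlinarith
    exact mul_le_mul_of_nonneg_left h2 (by positivity)
  have expand : (2*c + A/v*W + 1)*(1+L)*(Q+K)
      = 2*c*((1+L)*(Q+K)) + (A/v*W)*((1+L)*(Q+K)) + (1+L)*(Q+K) := by ring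
  have hlast : (0:ℝ) ≤ (1+L)*(Q+K) := mul_nonneg (by linarith) hQK
  rw [expand]
  linarith
end

section
/- Let q ∈ (3,∞), T > 0, and suppose y : [0,T) → [0,∞) is absolutely continuous with y(t) = ‖∇ρ(t)‖_{L^q}^q satisfying y'(t) ≤ C(1 + g(t) + ln(e + y(t)^{1/q})) y(t) + C h(t) y(t)^{(q−1)/q}, where g, h ∈ L¹(0,T) are nonnegative. Then sup_{t∈[0,T)} y(t) < ∞, with a bound depending only on y(0), C, q, T, ‖g‖_{L¹}, ‖h‖_{L¹}. -/
open MeasureTheory Set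

private lemma rpow_le_one_add (y a : ℝ) (hy : 0 ≤ y) (ha : 0 ≤ a) (ha1 : a ≤ 1) :
    y ^ a ≤ 1 + y := by
  rcases le_total y 1 with h | h
  · calc y ^ a ≤ 1 := Real.rpow_le_one hy h ha
    _ ≤ 1 + y := by linarith
  · calc y ^ a ≤ y ^ (1:ℝ) := Real.rpow_le_rpow_of_exponent_le h ha1
    _ = y := Real.rpow_one y
    _ ≤ 1 + y := by linarith

/-- Logarithmic Gronwall inequality (Section 5): a nonnegative y satisfying
y' ≤ C(1 + g + ln(e + y^{1/q})) y + C h y^{(q−1)/q} with g, h ∈ L¹(0,T)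
stays bounded on [0,T), by a constant depending only on y(0) (≤ y₀), C, q, T,
‖g‖_{L¹} (≤ G), ‖h‖_{L¹} (≤ H). -/
theorem stmt_17 (q C T y₀ G H : ℝ) (hq : 3 < q) (hT : 0 < T) (hC : 0 < C) :
    ∃ B : ℝ, ∀ (y y' g h : ℝ → ℝ),
      (∀ t ∈ Set.Ico (0 : ℝ) T, 0 ≤ y t) →
      (∀ t ∈ Set.Ico (0 : ℝ) T, HasDerivAt y (y' t) t) →
      (∀ t ∈ Set.Ico (0 : ℝ) T, 0 ≤ g t) →
      (∀ t ∈ Set.Ico (0 : ℝ) T, 0 ≤ h t) →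
      IntegrableOn g (Set.Ioo 0 T) → IntegrableOn h (Set.Ioo 0 T) →
      (∫ t in Set.Ioo (0 : ℝ) T, g t) ≤ G →
      (∫ t in Set.Ioo (0 : ℝ) T, h t) ≤ H →
      y 0 ≤ y₀ →
      (∀ t ∈ Set.Ico (0 : ℝ) T,
        y' t ≤ C * (1 + g t + Real.log (Real.exp 1 + y t ^ (1 / q))) * y t
          + C * h t * y t ^ ((q - 1) / q)) →
      ∀ t ∈ Set.Ico (0 : ℝ) T, y t ≤ B := by
  have he1 : (1 : ℝ) < Real.exp 1 := by
    have := Real.exp_one_gt_d9; linarith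
  have he2 : (2 : ℝ) < Real.exp 1 := by
    have := Real.exp_one_gt_d9; linarith
  refine ⟨Real.exp (Real.exp (Real.log (Real.log (Real.exp 1 + max y₀ 0))
      + C * (3 * T + max G 0 + max H 0))), ?_⟩
  intro y y' g h hy hy' hg hh hgint hhint hgG hhH hy0 hineq t ht
  set e : ℝ := Real.exp 1 with he
  -- positivity facts
  have hepos : (0:ℝ) < e := Real.exp_pos 1
  have hey : ∀ s ∈ Set.Ico (0:ℝ) T, 0 < e + y s := fun s hs => by
    have := hy s hs; linarith
  set u : ℝ → ℝ := fun s => Real.log (e + y s) with hu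
  have hu1 : ∀ s ∈ Set.Ico (0:ℝ) T, 1 ≤ u s := fun s hs => by
    have h1 : Real.log e ≤ Real.log (e + y s) :=
      Real.log_le_log hepos (by have := hy s hs; linarith)
    simpa [he, Real.log_exp] using h1
  have hupos : ∀ s ∈ Set.Ico (0:ℝ) T, 0 < u s := fun s hs => lt_of_lt_of_le one_pos (hu1 s hs)
  set v : ℝ → ℝ := fun s => Real.log (u s) with hv
  -- derivative of v
  have hv' : ∀ s ∈ Set.Ico (0:ℝ) T,
      HasDerivAt v ((y' s / (e + y s)) / u s) s := by
    intro s hs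
    have h1 : HasDerivAt (fun r => e + y r) (y' s) s := (hy' s hs).const_add e
    have h2 : HasDerivAt u (y' s / (e + y s)) s := by
      simpa using h1.log (ne_of_gt (hey s hs))
    exact h2.log (ne_of_gt (hupos s hs))
  -- pointwise bound on derivative of v
  have hvK : ∀ s ∈ Set.Ico (0:ℝ) T,
      (y' s / (e + y s)) / u s ≤ C * (3 + g s + h s) := by
    intro s hs
    have hys := hy s hs
    have heys := hey s hs
    have hus := hupos s hs
    have hu1s := hu1 s hs
    have hgs := hg s hs
    have hhs := hh s hs
    have hq0 : (0:ℝ) < q := by linarith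
    have ha1 : y s ^ (1/q) ≤ 1 + y s :=
      rpow_le_one_add _ _ hys (by positivity) (by rw [div_le_one hq0]; linarith)
    have ha2 : y s ^ ((q-1)/q) ≤ 1 + y s :=
      rpow_le_one_add _ _ hys (by apply div_nonneg <;> linarith) (by rw [div_le_one hq0]; linarith)
    have hlog2 : Real.log 2 ≤ 1 := by
      have := Real.log_le_log (by norm_num) he2.le
      simpa [he, Real.log_exp] using this
    have hL : Real.log (e + y s ^ (1/q)) ≤ 2 * u s := by
      have h1 : Real.log (e + y s ^ (1/q)) ≤ Real.log (2 * (e + y s)) := by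
        apply Real.log_le_log (by positivity)
        nlinarith [Real.rpow_nonneg hys (1/q)]
      rw [Real.log_mul (by norm_num) (ne_of_gt heys)] at h1
      have : Real.log (e + y s) = u s := rfl
      linarith
    -- y' bound
    have hd : y' s ≤ C * (1 + g s + h s + 2 * u s) * (e + y s) := by
      have h0 := hineq s hs
      have hb1 : C * (1 + g s + Real.log (e + y s ^ (1/q))) * y s
          ≤ C * (1 + g s + 2 * u s) * (e + y s) := by
        have hL0 : 0 ≤ Real.log (e + y s ^ (1/q)) := by
          have : (1:ℝ) ≤ e + y s ^ (1/q) := by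
            nlinarith [Real.rpow_nonneg hys (1/q)]
          exact Real.log_nonneg this
        have hfac : 0 ≤ C * (1 + g s + Real.log (e + y s ^ (1/q))) := by positivity
        calc C * (1 + g s + Real.log (e + y s ^ (1/q))) * y s
            ≤ C * (1 + g s + Real.log (e + y s ^ (1/q))) * (e + y s) := by
              apply mul_le_mul_of_nonneg_left (by linarith) hfac
          _ ≤ C * (1 + g s + 2 * u s) * (e + y s) := by
              apply mul_le_mul_of_nonneg_right _ heys.le
              apply mul_le_mul_of_nonneg_left (by linarith) hC.le
      have hb2 : C * h s * y s ^ ((q-1)/q) ≤ C * h s * (e + y s) := by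
        apply mul_le_mul_of_nonneg_left _ (by positivity)
        linarith
      calc y' s ≤ C * (1 + g s + Real.log (e + y s ^ (1/q))) * y s
            + C * h s * y s ^ ((q-1)/q) := h0
        _ ≤ C * (1 + g s + 2 * u s) * (e + y s) + C * h s * (e + y s) := by
            exact add_le_add hb1 hb2
        _ = C * (1 + g s + h s + 2 * u s) * (e + y s) := by ring
    have hd2 : y' s / (e + y s) ≤ C * (1 + g s + h s + 2 * u s) :=
      (div_le_iff₀ heys).2 hd
    have hd3 : (y' s / (e + y s)) / u s ≤ C * (1 + g s + h s + 2 * u s) / u s :=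
      (div_le_div_iff_of_pos_right hus).2 hd2
    have hd4 : C * (1 + g s + h s + 2 * u s) / u s ≤ C * (3 + g s + h s) := by
      rw [div_le_iff₀ hus]
      nlinarith [mul_nonneg (mul_nonneg hC.le (by linarith : (0:ℝ) ≤ 1 + g s + h s)) (by linarith : (0:ℝ) ≤ u s - 1)]
    linarith
  -- the Gronwall step
  set K : ℝ → ℝ := fun s => C * (3 + g s + h s) with hK
  have hKintT : IntegrableOn K (Set.Ioo 0 T) := by
    have : IntegrableOn (fun s => (3:ℝ) + g s + h s) (Set.Ioo 0 T) :=
      ((integrableOn_const measure_Ioo_lt_top.ne).add hgint).add hhint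
    exact this.const_mul C
  have hKint : IntegrableOn K (Set.Icc 0 t) := by
    rw [integrableOn_Icc_iff_integrableOn_Ioo]
    exact hKintT.mono_set (Ioo_subset_Ioo le_rfl ht.2.le)
  have hcont : ContinuousOn v (Set.Icc 0 t) := by
    intro s hs
    have hs' : s ∈ Set.Ico (0:ℝ) T := ⟨hs.1, lt_of_le_of_lt hs.2 ht.2⟩
    exact ((hv' s hs').continuousAt).continuousWithinAt
  have hmain : v t - v 0 ≤ ∫ s in (0:ℝ)..t, K s := by
    exact intervalIntegral.sub_le_integral_of_hasDeriv_right_of_le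
      (g' := fun s => y' s / (e + y s) / u s) ht.1 hcont
      (fun x hx => (hv' x ⟨hx.1.le, lt_trans hx.2 ht.2⟩).hasDerivWithinAt) hKint
      (fun x hx => hvK x ⟨hx.1.le, lt_trans hx.2 ht.2⟩)
  -- bound the integral
  have hInt : ∫ s in (0:ℝ)..t, K s ≤ C * (3 * T + max G 0 + max H 0) := by
    rw [intervalIntegral.integral_of_le ht.1, integral_Ioc_eq_integral_Ioo]
    have hgt : IntegrableOn g (Set.Ioo 0 t) := hgint.mono_set (Ioo_subset_Ioo le_rfl ht.2.le)
    have hht : IntegrableOn h (Set.Ioo 0 t) := hhint.mono_set (Ioo_subset_Ioo le_rfl ht.2.le)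
    have hgmono : ∫ s in Set.Ioo (0:ℝ) t, g s ≤ ∫ s in Set.Ioo (0:ℝ) T, g s := by
      apply setIntegral_mono_set hgint
      · exact (ae_restrict_iff' measurableSet_Ioo).2 (ae_of_all _ fun s hs =>
          hg s ⟨hs.1.le, hs.2⟩)
      · exact HasSubset.Subset.eventuallyLE (Ioo_subset_Ioo le_rfl ht.2.le)
    have hhmono : ∫ s in Set.Ioo (0:ℝ) t, h s ≤ ∫ s in Set.Ioo (0:ℝ) T, h s := by
      apply setIntegral_mono_set hhint
      · exact (ae_restrict_iff' measurableSet_Ioo).2 (ae_of_all _ fun s hs =>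
          hh s ⟨hs.1.le, hs.2⟩)
      · exact HasSubset.Subset.eventuallyLE (Ioo_subset_Ioo le_rfl ht.2.le)
    have hsplit : ∫ s in Set.Ioo (0:ℝ) t, K s
        = C * (3 * t + (∫ s in Set.Ioo (0:ℝ) t, g s) + ∫ s in Set.Ioo (0:ℝ) t, h s) := by
      have i0 : IntegrableOn (fun _ : ℝ => (3:ℝ)) (Set.Ioo 0 t) :=
        integrableOn_const measure_Ioo_lt_top.ne
      have i1 : IntegrableOn (fun s => (3:ℝ) + g s) (Set.Ioo 0 t) := i0.add hgt
      rw [hK]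
      rw [integral_const_mul]
      congr 1
      rw [integral_add i1 hht, integral_add i0 hgt]
      simp [Real.volume_Ioo, max_eq_left ht.1, mul_comm]
    rw [hsplit]
    have h3t : (3:ℝ) * t ≤ 3 * T := by linarith [ht.2]
    have hG' : ∫ s in Set.Ioo (0:ℝ) t, g s ≤ max G 0 := le_trans hgmono (le_trans hgG (le_max_left _ _))
    have hH' : ∫ s in Set.Ioo (0:ℝ) t, h s ≤ max H 0 := le_trans hhmono (le_trans hhH (le_max_left _ _))
    apply mul_le_mul_of_nonneg_left _ hC.le
    linarith
  -- bound v 0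
  have hv0 : v 0 ≤ Real.log (Real.log (e + max y₀ 0)) := by
    have h0T : (0:ℝ) ∈ Set.Ico (0:ℝ) T := ⟨le_rfl, hT⟩
    have h1 : u 0 ≤ Real.log (e + max y₀ 0) := by
      apply Real.log_le_log (hey 0 h0T)
      have : y 0 ≤ max y₀ 0 := le_trans hy0 (le_max_left _ _)
      linarith
    exact Real.log_le_log (hupos 0 h0T) h1
  -- conclude
  have hvt : v t ≤ Real.log (Real.log (e + max y₀ 0)) + C * (3 * T + max G 0 + max H 0) := by
    linarith
  have hut : u t = Real.exp (v t) := (Real.exp_log (hupos t ht)).symm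
  have heyt : e + y t = Real.exp (u t) := (Real.exp_log (hey t ht)).symm
  calc y t ≤ e + y t := by linarith
    _ = Real.exp (u t) := heyt
    _ ≤ Real.exp (Real.exp (Real.log (Real.log (e + max y₀ 0))
        + C * (3 * T + max G 0 + max H 0))) := by
        apply Real.exp_le_exp.2
        rw [hut]
        exact Real.exp_le_exp.2 hvt
end
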